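/- Assume the set-valued map K satisfies (H1) and (H2). Let f : ℝ^d × ℝ^d → [0,∞) be measurable with f ∈ L¹ ∩ L∞(ℝ^d × ℝ^d), and suppose there is R > 0 such that f(y,w) = 0 whenever |w| > R. Then there exists a constant C' > 0, depending only on d, R, ‖f‖_{L¹∩L∞}, and the constants in (H1)–(H2), such that for all x, v, x̃, ṽ ∈ ℝ^d: |F(f)(x,v)| ≤ C'(1 + |v|) ‖f‖_{L¹} and |F(f)(x,v) − F(f)(x̃,ṽ)| ≤ C'(1 + |v|)(|x − x̃| + |v − ṽ|); that is, the force field F(f) grows at most linearly at infinity and is locally Lipschitz in phase space. -/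

import Mathlib

open MeasureTheory Metric Set Pointwise
noncomputable section

abbrev E (d : ℕ) : Type := EuclideanSpace ℝ (Fin d)

lemma cross_frontier {X : Type*} [NormedAddCommGroup X] [NormedSpace ℝ X]
    {s : Set X} {a b : X} (ha : a ∈ s) (hb : b ∉ s) :
    ∃ z ∈ frontier s, ‖a - z‖ ≤ ‖a - b‖ ∧ ‖b - z‖ ≤ ‖a - b‖ := by
  by_cases h : (segment ℝ a b ∩ frontier s).Nonempty
  · obtain ⟨z, hz1, hz2⟩ := h
    rw [segment_eq_image'] at hz1
    obtain ⟨t, ht, rfl⟩ := hz1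
    have hba : ‖a - b‖ = ‖b - a‖ := norm_sub_rev a b
    refine ⟨_, hz2, ?_, ?_⟩
    · have e : a - (a + t • (b - a)) = (-t) • (b - a) := by module
      rw [e, norm_smul, Real.norm_eq_abs, abs_neg, abs_of_nonneg ht.1, hba]
      nlinarith [ht.1, ht.2, norm_nonneg (b - a)]
    · have e : b - (a + t • (b - a)) = (1 - t) • (b - a) := by module
      rw [e, norm_smul, Real.norm_eq_abs, abs_of_nonneg (by linarith [ht.2] : (0:ℝ) ≤ 1 - t), hba]
      nlinarith [ht.1, ht.2, norm_nonneg (b - a)]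
  · exfalso
    rw [Set.not_nonempty_iff_eq_empty] at h
    have hfr : ∀ p ∈ segment ℝ a b, p ∉ frontier s := by
      intro p hp hpf
      exact absurd (Set.mem_inter hp hpf) (by rw [h]; exact Set.notMem_empty p)
    have hconn := (convex_segment a b).isPreconnected
    have hsub : segment ℝ a b ⊆ interior s ∪ (closure s)ᶜ := by
      intro p hp
      by_cases hpc : p ∈ closure s
      · left
        by_contra hpi
        exact hfr p hp ⟨hpc, hpi⟩
      · right; exact hpc
    have hu : (segment ℝ a b ∩ interior s).Nonempty := by
      refine ⟨a, left_mem_segment ℝ a b, ?_⟩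
      by_contra hai
      exact hfr a (left_mem_segment ℝ a b) ⟨subset_closure ha, hai⟩
    have hv : (segment ℝ a b ∩ (closure s)ᶜ).Nonempty := by
      refine ⟨b, right_mem_segment ℝ a b, ?_⟩
      intro hbc
      exact hfr b (right_mem_segment ℝ a b) ⟨hbc, fun hbi => hb (interior_subset hbi)⟩
    obtain ⟨p, -, hpi, hpc⟩ := hconn (interior s) (closure s)ᶜ isOpen_interior
      isClosed_closure.isOpen_compl hsub hu hv
    exact hpc (subset_closure (interior_subset hpi))

lemma mem_add_closedBall_of_near {d : ℕ} {A : Set (E d)} {z p : E d} {ρ : ℝ}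
    (hz : z ∈ A) (hd : ‖p - z‖ ≤ ρ) : p ∈ A + closedBall (0 : E d) ρ := by
  have : p = z + (p - z) := by abel
  rw [this]
  exact Set.add_mem_add hz (by rwa [mem_closedBall_zero_iff])

lemma add_ball_add_ball {d : ℕ} (A : Set (E d)) {ρ₁ ρ₂ : ℝ} (h1 : 0 ≤ ρ₁) (h2 : 0 ≤ ρ₂) :
    A + closedBall (0 : E d) ρ₁ + closedBall (0 : E d) ρ₂ ⊆ A + closedBall (0 : E d) (ρ₁ + ρ₂) := by
  rw [add_assoc, closedBall_add_closedBall h1 h2, add_zero]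

lemma geom {d : ℕ} {Kv Kv' Tv Tv' : Set (E d)}
    (hfr : frontier Kv ⊆ Tv) (hfr' : frontier Kv' ⊆ Tv')
    {r : ℝ} (hr : 0 ≤ r)
    (hsd : symmDiff Kv Kv' ⊆ Tv + closedBall (0 : E d) r)
    (hTT : Tv' ⊆ Tv + closedBall (0 : E d) r)
    {a b : E d} (hne : ¬(a ∈ Kv ↔ b ∈ Kv')) :
    a ∈ Tv + closedBall (0 : E d) (r + ‖a - b‖) := by
  have hab : (0:ℝ) ≤ ‖a - b‖ := norm_nonneg _
  have hmono : Tv + closedBall (0 : E d) r ⊆ Tv + closedBall (0 : E d) (r + ‖a - b‖) :=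
    Set.add_subset_add_left (closedBall_subset_closedBall (by linarith))
  have hstep : ∀ z ∈ Tv + closedBall (0 : E d) r, ‖a - z‖ ≤ ‖a - b‖ →
      a ∈ Tv + closedBall (0 : E d) (r + ‖a - b‖) := by
    intro z hz hd
    exact add_ball_add_ball Tv hr hab (mem_add_closedBall_of_near hz hd)
  by_cases h1 : a ∈ Kv
  · have h2 : b ∉ Kv' := fun h => hne ⟨fun _ => h, fun _ => h1⟩
    by_cases h3 : a ∈ Kv'
    · obtain ⟨z, hzf, hza, -⟩ := cross_frontier h3 h2
      exact hstep z (hTT (hfr' hzf)) hza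
    · exact hmono (hsd (Set.mem_symmDiff.2 (Or.inl ⟨h1, h3⟩)))
  · have h2 : b ∈ Kv' := by
      by_contra h2
      exact hne ⟨fun h => absurd h h1, fun h => absurd h h2⟩
    by_cases h3 : b ∈ Kv
    · obtain ⟨z, hzf, -, hza⟩ := cross_frontier h3 h1
      rw [norm_sub_rev b a] at hza
      exact hstep z (mem_add_closedBall_of_near (hfr hzf) (by simpa using hr)) hza
    · have := hsd (Set.mem_symmDiff.2 (Or.inr ⟨h2, h3⟩))
      exact hstep b this le_rfl

lemma integrand_bound {d : ℕ} {f : E d × E d → ℝ} (hfnn : ∀ z, 0 ≤ f z)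
    {R : ℝ} (hsupp : ∀ z : E d × E d, R < ‖z.2‖ → f z = 0)
    (s : Set (E d)) (x v : E d) (p : E d × E d) :
    ‖(Set.indicator s (fun _ => (1:ℝ)) (x - p.1) * f p) • (p.2 - v)‖ ≤ (R + ‖v‖) * f p := by
  rcases le_or_gt ‖p.2‖ R with h | h
  · rw [norm_smul, Real.norm_eq_abs, abs_mul]
    have h1 : |Set.indicator s (fun _ => (1:ℝ)) (x - p.1)| ≤ 1 := by
      classical
      rw [Set.indicator_apply]
      split <;> simp
    have h2 : |f p| = f p := abs_of_nonneg (hfnn p)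
    have h3 : ‖p.2 - v‖ ≤ R + ‖v‖ := (norm_sub_le _ _).trans (by linarith)
    have h4 := norm_nonneg (p.2 - v)
    rw [h2]
    calc |Set.indicator s (fun _ => (1:ℝ)) (x - p.1)| * f p * ‖p.2 - v‖
        ≤ 1 * f p * ‖p.2 - v‖ :=
          mul_le_mul_of_nonneg_right (mul_le_mul_of_nonneg_right h1 (hfnn p)) h4
      _ = f p * ‖p.2 - v‖ := by ring
      _ ≤ f p * (R + ‖v‖) := mul_le_mul_of_nonneg_left h3 (hfnn p)
      _ = (R + ‖v‖) * f p := mul_comm _ _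
  · rw [hsupp p h]
    simp

lemma integrand_integrable {d : ℕ} {K : E d → Set (E d)} (hKcp : ∀ v, IsCompact (K v))
    {f : E d × E d → ℝ} (hfmeas : Measurable f) (hfnn : ∀ z, 0 ≤ f z)
    (hfL1 : Integrable f volume)
    {R : ℝ} (hsupp : ∀ z : E d × E d, R < ‖z.2‖ → f z = 0)
    (x v w : E d) :
    Integrable (fun p : E d × E d =>
      (Set.indicator (K w) (fun _ => (1:ℝ)) (x - p.1) * f p) • (p.2 - v)) volume := by
  have hmeas : Measurable (fun p : E d × E d =>
      (Set.indicator (K w) (fun _ => (1:ℝ)) (x - p.1) * f p) • (p.2 - v)) := by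
    have h1 : Measurable (Set.indicator (K w) (fun _ => (1:ℝ))) :=
      measurable_const.indicator (hKcp w).isClosed.measurableSet
    exact ((h1.comp (measurable_const.sub measurable_fst)).mul hfmeas).smul
      (measurable_snd.sub measurable_const)
  refine Integrable.mono' (hfL1.const_mul (R + ‖v‖)) hmeas.aestronglyMeasurable ?_
  filter_upwards with p
  exact integrand_bound hfnn hsupp (K w) x v p


lemma arith_crude (R nv nv' I1 Cc dx dv : ℝ) (hR : 0 < R) (hI1 : 0 ≤ I1) (hC : 0 < Cc)
    (hnv : 0 ≤ nv) (hdx : 0 ≤ dx) (hdv : 0 ≤ dv)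
    (hvv : nv' ≤ nv + dv) (h1 : 1 ≤ Cc * dv + dx) :
    (R + nv) * I1 + (R + nv') * I1 ≤ I1 * ((2*R+2)*(Cc+1)+1) * (1+nv) * (dx+dv) := by
  have e1 : Cc * dv + dx ≤ (Cc+1) * (dx+dv) := by nlinarith
  have e2 : (1:ℝ) ≤ (Cc+1)*(dx+dv) := le_trans h1 e1
  have h2R : (0:ℝ) ≤ 2*R + 2*nv := by linarith
  have ha : I1*(2*R+2*nv) ≤ I1*(2*R+2*nv) * ((Cc+1)*(dx+dv)) :=
    le_mul_of_one_le_right (mul_nonneg hI1 h2R) e2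
  have hb : I1*(2*R+2*nv) * ((Cc+1)*(dx+dv)) ≤ I1*((2*R+2)*(1+nv)) * ((Cc+1)*(dx+dv)) := by
    apply mul_le_mul_of_nonneg_right _ (by positivity)
    apply mul_le_mul_of_nonneg_left (by nlinarith) hI1
  have hc : I1*dv ≤ I1*((1+nv)*(dx+dv)) := by
    apply mul_le_mul_of_nonneg_left (by nlinarith) hI1
  have hd : (R+nv')*I1 ≤ (R+nv+dv)*I1 := mul_le_mul_of_nonneg_right (by linarith) hI1
  nlinarith [ha, hb, hc, hd]

lemma arith_fine (R mR M Cc VB I1 dx dv nv : ℝ) (hRm : R ≤ mR) (h1R : 1 ≤ mR)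
    (hM : 0 ≤ M) (hC : 0 < Cc) (hVB : 0 ≤ VB) (hI1 : 0 ≤ I1)
    (hdx : 0 ≤ dx) (hdv : 0 ≤ dv) (hnv : 0 ≤ nv) (hRpos : 0 < R) :
    (R + nv) * M * (Cc * (Cc*dv+dx) * VB) + dv * I1 ≤
      (mR * M * Cc * (Cc+1) * VB + I1) * (1+nv) * (dx+dv) := by
  have e1 : Cc * dv + dx ≤ (Cc+1) * (dx+dv) := by nlinarith
  have f1 : R + nv ≤ mR * (1+nv) := by nlinarith
  have f2 : Cc*(Cc*dv+dx)*VB ≤ Cc*((Cc+1)*(dx+dv))*VB :=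
    mul_le_mul_of_nonneg_right (mul_le_mul_of_nonneg_left e1 hC.le) hVB
  have t1 : (R + nv) * M * (Cc * (Cc*dv+dx) * VB) ≤
      (mR * (1+nv)) * M * (Cc*((Cc+1)*(dx+dv))*VB) := by
    apply mul_le_mul (mul_le_mul_of_nonneg_right f1 hM) f2 (by positivity) (by positivity)
  have t2 : dv * I1 ≤ ((1+nv)*(dx+dv)) * I1 :=
    mul_le_mul_of_nonneg_right (by nlinarith) hI1
  nlinarith [t1, t2]

/-- The alignment force `F(f)(x,v) = ∫∫ 1_{K(v)}(x−y) (w − v) f(y,w) dy dw`. -/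
noncomputable def force {d : ℕ} (K : E d → Set (E d)) (f : E d × E d → ℝ)
    (x v : E d) : E d :=
  ∫ p : E d × E d, (Set.indicator (K v) (fun _ => (1:ℝ)) (x - p.1) * f p) • (p.2 - v)

set_option maxHeartbeats 2000000 in
/-- Under (H1)–(H2), for a nonnegative `f ∈ L¹ ∩ L∞(ℝ^d × ℝ^d)`
vanishing for `|w| > R`, the force field `F(f)` grows at most linearly at infinity and
is locally Lipschitz in phase space: there is `C' > 0` (depending only on `d`, `R`,
`‖f‖_{L¹∩L∞}` and the constants in (H1)–(H2)) with
`|F(f)(x,v)| ≤ C'(1+|v|)‖f‖_{L¹}` and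
`|F(f)(x,v) − F(f)(x̃,ṽ)| ≤ C'(1+|v|)(|x−x̃| + |v−ṽ|)`. -/
theorem stmt5 {d : ℕ} (K Θ : E d → Set (E d)) (𝒦 : Set (E d)) (C : ℝ)
    (hKne : ∀ v, (K v).Nonempty) (hKcp : ∀ v, IsCompact (K v))
    (h𝒦 : IsCompact 𝒦) (hKsub : ∀ v, K v ⊆ 𝒦)
    (hΘcl : ∀ v, IsClosed (Θ v)) (hC : 0 < C)
    (h2i : ∀ v, frontier (K v) ⊆ Θ v)
    (h2ii : ∀ v, ∀ ε ∈ Set.Ioo (0:ℝ) 1,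
      volume (Θ v + closedBall (0 : E d) ε) ≤ ENNReal.ofReal (C * ε))
    (h2iii : ∀ v w, symmDiff (K v) (K w) ⊆ Θ v + closedBall (0 : E d) (C * ‖v - w‖))
    (h2iv : ∀ v w, Θ w ⊆ Θ v + closedBall (0 : E d) (C * ‖v - w‖))
    (f : E d × E d → ℝ) (hfmeas : Measurable f) (hfnn : ∀ z, 0 ≤ f z)
    (hfL1 : Integrable f volume) (hfLinf : MemLp f ⊤ volume)
    (R : ℝ) (hR : 0 < R) (hsupp : ∀ z : E d × E d, R < ‖z.2‖ → f z = 0) :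
    ∃ C' > 0,
      (∀ x v : E d, ‖force K f x v‖ ≤ C' * (1 + ‖v‖) * ∫ z, f z) ∧
      (∀ x v x' v' : E d, ‖force K f x v - force K f x' v'‖ ≤
        C' * (1 + ‖v‖) * (‖x - x'‖ + ‖v - v'‖)) := by
  classical
  set I1 := ∫ z, f z with hI1def
  have hI1 : 0 ≤ I1 := integral_nonneg hfnn
  set M := (eLpNorm f ⊤ volume).toReal with hMdef
  have hM0 : 0 ≤ M := ENNReal.toReal_nonneg
  have hMae : ∀ᵐ p, f p ≤ M := by
    have h1 : ∀ᵐ p, ‖f p‖₊ ≤ eLpNormEssSup f volume := ae_le_eLpNormEssSup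
    have hfin : eLpNormEssSup f volume < ⊤ := by
      rw [← eLpNorm_exponent_top]; exact hfLinf.2
    filter_upwards [h1] with p hp
    have : |f p| ≤ M := by
      rw [hMdef, eLpNorm_exponent_top]
      calc |f p| = ((‖f p‖₊ : ENNReal)).toReal := by simp [Real.norm_eq_abs]
        _ ≤ (eLpNormEssSup f volume).toReal := ENNReal.toReal_mono hfin.ne hp
    exact (abs_le.1 this).2
  set VB := (volume (closedBall (0:E d) R)).toReal with hVBdef
  have hVB0 : 0 ≤ VB := ENNReal.toReal_nonneg
  have hb1 : ∀ x v : E d, ‖force K f x v‖ ≤ (R + ‖v‖) * I1 := by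
    intro x v
    calc ‖force K f x v‖
        ≤ ∫ p : E d × E d, ‖(Set.indicator (K v) (fun _ => (1:ℝ)) (x - p.1) * f p) • (p.2 - v)‖ :=
          norm_integral_le_integral_norm _
      _ ≤ ∫ p : E d × E d, (R + ‖v‖) * f p :=
          integral_mono (integrand_integrable hKcp hfmeas hfnn hfL1 hsupp x v v).norm
            (hfL1.const_mul _) (integrand_bound hfnn hsupp (K v) x v)
      _ = (R + ‖v‖) * I1 := integral_const_mul _ _
  -- the fine Lipschitz estimate
  have hfine : ∀ x v x' v' : E d, 0 < C * ‖v - v'‖ + ‖x - x'‖ → C * ‖v - v'‖ + ‖x - x'‖ < 1 →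
      ‖force K f x v - force K f x' v'‖ ≤
        (R + ‖v‖) * M * (C * (C * ‖v - v'‖ + ‖x - x'‖) * VB) + ‖v - v'‖ * I1 := by
    intro x v x' v' hε0 hε1
    set ε := C * ‖v - v'‖ + ‖x - x'‖ with hεdef
    have hTclosed : IsClosed (Θ v + closedBall (0:E d) ε) := by
      rw [add_comm]
      exact IsClosed.add_left_of_isCompact (hΘcl v) (isCompact_closedBall _ _)
    have hTvol : volume (Θ v + closedBall (0:E d) ε) ≤ ENNReal.ofReal (C * ε) :=
      h2ii v ε ⟨hε0, hε1⟩
    set A : Set (E d) := (fun y => x - y) ⁻¹' (Θ v + closedBall (0:E d) ε) with hAdef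
    have hAmeas : MeasurableSet A :=
      hTclosed.measurableSet.preimage (measurable_const.sub measurable_id)
    have hAvol : volume A = volume (Θ v + closedBall (0:E d) ε) :=
      (Measure.measurePreserving_sub_left volume x).measure_preimage
        hTclosed.measurableSet.nullMeasurableSet
    set S := A ×ˢ closedBall (0:E d) R with hSdef
    have hSmeas : MeasurableSet S := hAmeas.prod measurableSet_closedBall
    have hSvol : volume S ≤ ENNReal.ofReal (C * ε) * volume (closedBall (0:E d) R) := by
      rw [hSdef, show (volume : Measure (E d × E d)) = (volume : Measure (E d)).prod volume
        from rfl, Measure.prod_prod, hAvol]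
      exact mul_le_mul_left hTvol _
    have hfin2 : ENNReal.ofReal (C * ε) * volume (closedBall (0:E d) R) < ⊤ :=
      ENNReal.mul_lt_top ENNReal.ofReal_lt_top measure_closedBall_lt_top
    have hSfin : volume S < ⊤ := lt_of_le_of_lt hSvol hfin2
    have hCε0 : 0 ≤ C * ε := le_of_lt (mul_pos hC hε0)
    have hSvolR : (volume S).toReal ≤ C * ε * VB := by
      have h := ENNReal.toReal_mono hfin2.ne hSvol
      rwa [ENNReal.toReal_mul, ENNReal.toReal_ofReal hCε0] at h
    have hg1 := integrand_integrable hKcp hfmeas hfnn hfL1 hsupp x v v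
    have hgm := integrand_integrable hKcp hfmeas hfnn hfL1 hsupp x' v v'
    have hg2 := integrand_integrable hKcp hfmeas hfnn hfL1 hsupp x' v' v'
    have hsplit : force K f x v - force K f x' v' =
        (∫ p : E d × E d, ((Set.indicator (K v) (fun _ => (1:ℝ)) (x - p.1) * f p) • (p.2 - v)
          - (Set.indicator (K v') (fun _ => (1:ℝ)) (x' - p.1) * f p) • (p.2 - v)))
        + (∫ p : E d × E d, ((Set.indicator (K v') (fun _ => (1:ℝ)) (x' - p.1) * f p) • (p.2 - v)
          - (Set.indicator (K v') (fun _ => (1:ℝ)) (x' - p.1) * f p) • (p.2 - v'))) := by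
      rw [integral_sub hg1 hgm, integral_sub hgm hg2]
      simp only [force]
      abel
    -- term A
    have hTermA : ‖∫ p : E d × E d,
        ((Set.indicator (K v) (fun _ => (1:ℝ)) (x - p.1) * f p) • (p.2 - v)
          - (Set.indicator (K v') (fun _ => (1:ℝ)) (x' - p.1) * f p) • (p.2 - v))‖ ≤
        (R + ‖v‖) * M * (volume S).toReal := by
      have hRv : (0:ℝ) ≤ R + ‖v‖ := by positivity
      have hhint : Integrable (S.indicator fun _ => (R + ‖v‖) * M) volume :=
        (integrable_indicator_iff hSmeas).2 (integrableOn_const hSfin.ne)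
      have hae : ∀ᵐ p : E d × E d,
          ‖(Set.indicator (K v) (fun _ => (1:ℝ)) (x - p.1) * f p) • (p.2 - v)
            - (Set.indicator (K v') (fun _ => (1:ℝ)) (x' - p.1) * f p) • (p.2 - v)‖ ≤
          S.indicator (fun _ => (R + ‖v‖) * M) p := by
        filter_upwards [hMae] with p hfp
        have hnn : 0 ≤ S.indicator (fun _ => (R + ‖v‖) * M) p :=
          Set.indicator_nonneg (fun _ _ => by positivity) p
        set i1 := Set.indicator (K v) (fun _ => (1:ℝ)) (x - p.1) with hi1
        set i2 := Set.indicator (K v') (fun _ => (1:ℝ)) (x' - p.1) with hi2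
        have hdiff : (i1 * f p) • (p.2 - v) - (i2 * f p) • (p.2 - v)
            = ((i1 - i2) * f p) • (p.2 - v) := by rw [← sub_smul, ← sub_mul]
        rw [hdiff]
        by_cases hii : i1 = i2
        · rw [hii]; simp [hnn]
        · have hiff : ¬((x - p.1) ∈ K v ↔ (x' - p.1) ∈ K v') := by
            intro hif
            apply hii
            rw [hi1, hi2, Set.indicator_apply, Set.indicator_apply]
            by_cases hmem : (x - p.1) ∈ K v
            · rw [if_pos hmem, if_pos (hif.1 hmem)]
            · rw [if_neg hmem, if_neg (fun hx => hmem (hif.2 hx))]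
          have hmemT : x - p.1 ∈ Θ v + closedBall (0:E d) ε := by
            have := geom (h2i v) (h2i v') (by positivity : (0:ℝ) ≤ C * ‖v - v'‖)
              (h2iii v v') (h2iv v v') hiff
            have hxx : ‖(x - p.1) - (x' - p.1)‖ = ‖x - x'‖ := by
              rw [sub_sub_sub_cancel_right]
            rwa [hxx, ← hεdef] at this
          rcases le_or_gt ‖p.2‖ R with hp2 | hp2
          · have hpS : p ∈ S := by
              refine ⟨hmemT, ?_⟩
              rw [mem_closedBall_zero_iff]
              exact hp2
            rw [Set.indicator_of_mem hpS]
            have h01 : ∀ (s : Set (E d)) (y : E d),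
                Set.indicator s (fun _ => (1:ℝ)) y = 0 ∨
                Set.indicator s (fun _ => (1:ℝ)) y = 1 := by
              intro s y
              rw [Set.indicator_apply]
              split
              · exact Or.inr rfl
              · exact Or.inl rfl
            have habs : |i1 - i2| ≤ 1 := by
              rcases h01 (K v) (x - p.1) with h | h <;> rcases h01 (K v') (x' - p.1) with h' | h' <;>
                rw [hi1, hi2, h, h'] <;> norm_num
            have hnv : ‖p.2 - v‖ ≤ R + ‖v‖ := (norm_sub_le _ _).trans (by linarith)
            rw [norm_smul, Real.norm_eq_abs, abs_mul, abs_of_nonneg (hfnn p)]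
            calc |i1 - i2| * f p * ‖p.2 - v‖ ≤ 1 * f p * ‖p.2 - v‖ :=
                  mul_le_mul_of_nonneg_right (mul_le_mul_of_nonneg_right habs (hfnn p))
                    (norm_nonneg _)
              _ = f p * ‖p.2 - v‖ := by ring
              _ ≤ M * (R + ‖v‖) := mul_le_mul hfp hnv (norm_nonneg _) hM0
              _ = (R + ‖v‖) * M := mul_comm _ _
          · rw [hsupp p hp2]
            simpa using hnn
      calc ‖∫ p : E d × E d,
            ((Set.indicator (K v) (fun _ => (1:ℝ)) (x - p.1) * f p) • (p.2 - v)
              - (Set.indicator (K v') (fun _ => (1:ℝ)) (x' - p.1) * f p) • (p.2 - v))‖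
          ≤ ∫ p : E d × E d,
            ‖(Set.indicator (K v) (fun _ => (1:ℝ)) (x - p.1) * f p) • (p.2 - v)
              - (Set.indicator (K v') (fun _ => (1:ℝ)) (x' - p.1) * f p) • (p.2 - v)‖ :=
            norm_integral_le_integral_norm _
        _ ≤ ∫ p : E d × E d, S.indicator (fun _ => (R + ‖v‖) * M) p :=
            integral_mono_ae (hg1.sub hgm).norm hhint hae
        _ = (volume S).toReal * ((R + ‖v‖) * M) := by
            rw [integral_indicator_const _ hSmeas]; simp [Measure.real]
        _ = (R + ‖v‖) * M * (volume S).toReal := by ring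
    -- term B
    have hTermB : ‖∫ p : E d × E d,
        ((Set.indicator (K v') (fun _ => (1:ℝ)) (x' - p.1) * f p) • (p.2 - v)
          - (Set.indicator (K v') (fun _ => (1:ℝ)) (x' - p.1) * f p) • (p.2 - v'))‖ ≤
        ‖v - v'‖ * I1 := by
      have hbd : ∀ p : E d × E d,
          ‖(Set.indicator (K v') (fun _ => (1:ℝ)) (x' - p.1) * f p) • (p.2 - v)
            - (Set.indicator (K v') (fun _ => (1:ℝ)) (x' - p.1) * f p) • (p.2 - v')‖ ≤
          ‖v - v'‖ * f p := by
        intro p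
        set i2 := Set.indicator (K v') (fun _ => (1:ℝ)) (x' - p.1) with hi2
        have hdiff : (i2 * f p) • (p.2 - v) - (i2 * f p) • (p.2 - v')
            = (i2 * f p) • (v' - v) := by
          rw [← smul_sub]
          congr 1
          abel
        rw [hdiff, norm_smul, Real.norm_eq_abs, abs_mul, abs_of_nonneg (hfnn p)]
        have habs : |i2| ≤ 1 := by
          rw [hi2, Set.indicator_apply]
          split <;> simp
        have hnv : ‖v' - v‖ = ‖v - v'‖ := norm_sub_rev _ _
        rw [hnv]
        calc |i2| * f p * ‖v - v'‖ ≤ 1 * f p * ‖v - v'‖ :=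
              mul_le_mul_of_nonneg_right (mul_le_mul_of_nonneg_right habs (hfnn p))
                (norm_nonneg _)
          _ = f p * ‖v - v'‖ := by ring
          _ = ‖v - v'‖ * f p := mul_comm _ _
      calc ‖∫ p : E d × E d,
            ((Set.indicator (K v') (fun _ => (1:ℝ)) (x' - p.1) * f p) • (p.2 - v)
              - (Set.indicator (K v') (fun _ => (1:ℝ)) (x' - p.1) * f p) • (p.2 - v'))‖
          ≤ ∫ p : E d × E d,
            ‖(Set.indicator (K v') (fun _ => (1:ℝ)) (x' - p.1) * f p) • (p.2 - v)
              - (Set.indicator (K v') (fun _ => (1:ℝ)) (x' - p.1) * f p) • (p.2 - v')‖ :=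
            norm_integral_le_integral_norm _
        _ ≤ ∫ p : E d × E d, ‖v - v'‖ * f p :=
            integral_mono (hgm.sub hg2).norm (hfL1.const_mul _) hbd
        _ = ‖v - v'‖ * I1 := integral_const_mul _ _
    rw [hsplit]
    have hRvM : (0:ℝ) ≤ (R + ‖v‖) * M := by positivity
    calc ‖_ + _‖ ≤ _ + _ := norm_add_le _ _
      _ ≤ (R + ‖v‖) * M * (volume S).toReal + ‖v - v'‖ * I1 := add_le_add hTermA hTermB
      _ ≤ (R + ‖v‖) * M * (C * ε * VB) + ‖v - v'‖ * I1 := by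
          have := mul_le_mul_of_nonneg_left hSvolR hRvM
          linarith
  -- assemble
  set M₁ := I1 * ((2 * R + 2) * (C + 1) + 1) with hM₁def
  set M₂ := (max R 1) * M * C * (C + 1) * VB + I1 with hM₂def
  have hmaxR : (0:ℝ) < max R 1 := lt_of_lt_of_le one_pos (le_max_right _ _)
  have hM₁0 : 0 ≤ M₁ := by
    apply mul_nonneg hI1
    nlinarith [hR, hC]
  have hM₂0 : 0 ≤ M₂ := by
    apply add_nonneg _ hI1
    positivity
  refine ⟨max (max R 1) (max M₁ M₂) + 1, by positivity, ?_, ?_⟩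
  · intro x v
    have h := hb1 x v
    have h1 : R + ‖v‖ ≤ (max (max R 1) (max M₁ M₂) + 1) * (1 + ‖v‖) := by
      have hRle : R ≤ max R 1 := le_max_left _ _
      have h1le : (1:ℝ) ≤ max R 1 := le_max_right _ _
      have hle : max R 1 ≤ max (max R 1) (max M₁ M₂) + 1 :=
        (le_max_left _ _).trans (by linarith)
      nlinarith [norm_nonneg v]
    calc ‖force K f x v‖ ≤ (R + ‖v‖) * I1 := h
      _ ≤ (max (max R 1) (max M₁ M₂) + 1) * (1 + ‖v‖) * I1 :=
          mul_le_mul_of_nonneg_right h1 hI1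
  · intro x v x' v'
    set C' := max (max R 1) (max M₁ M₂) + 1 with hC'def
    have hC'M₁ : M₁ ≤ C' := ((le_max_left _ _).trans (le_max_right _ _)).trans (by linarith)
    have hC'M₂ : M₂ ≤ C' := ((le_max_right _ _).trans (le_max_right _ _)).trans (by linarith)
    have hC'R : max R 1 ≤ C' := (le_max_left _ _).trans (by linarith)
    have hC'0 : (0:ℝ) < C' := by positivity
    have hnx : (0:ℝ) ≤ ‖x - x'‖ := norm_nonneg _
    have hnv : (0:ℝ) ≤ ‖v - v'‖ := norm_nonneg _
    have hnv0 : (0:ℝ) ≤ ‖v‖ := norm_nonneg v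
    by_cases hε0 : 0 < C * ‖v - v'‖ + ‖x - x'‖
    · by_cases hε1 : C * ‖v - v'‖ + ‖x - x'‖ < 1
      · -- fine case
        have h := hfine x v x' v' hε0 hε1
        calc ‖force K f x v - force K f x' v'‖
            ≤ (R + ‖v‖) * M * (C * (C * ‖v - v'‖ + ‖x - x'‖) * VB) + ‖v - v'‖ * I1 := h
          _ ≤ M₂ * (1 + ‖v‖) * (‖x - x'‖ + ‖v - v'‖) := by
              rw [hM₂def]
              exact arith_fine R (max R 1) M C VB I1 ‖x - x'‖ ‖v - v'‖ ‖v‖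
                (le_max_left _ _) (le_max_right _ _) hM0 hC hVB0 hI1 hnx hnv hnv0 hR
          _ ≤ C' * (1 + ‖v‖) * (‖x - x'‖ + ‖v - v'‖) :=
              mul_le_mul_of_nonneg_right
                (mul_le_mul_of_nonneg_right hC'M₂ (by positivity)) (by positivity)
      · -- crude case
        push_neg at hε1
        have h1 := hb1 x v
        have h2 := hb1 x' v'
        have hvv : ‖v'‖ ≤ ‖v‖ + ‖v - v'‖ := by
          have := norm_sub_norm_le v' v
          rw [norm_sub_rev v' v] at this
          linarith
        calc ‖force K f x v - force K f x' v'‖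
            ≤ ‖force K f x v‖ + ‖force K f x' v'‖ := norm_sub_le _ _
          _ ≤ (R + ‖v‖) * I1 + (R + ‖v'‖) * I1 := add_le_add h1 h2
          _ ≤ M₁ * (1 + ‖v‖) * (‖x - x'‖ + ‖v - v'‖) := by
              rw [hM₁def]
              exact arith_crude R ‖v‖ ‖v'‖ I1 C ‖x - x'‖ ‖v - v'‖ hR hI1 hC hnv0 hnx hnv
                hvv hε1
          _ ≤ C' * (1 + ‖v‖) * (‖x - x'‖ + ‖v - v'‖) :=
              mul_le_mul_of_nonneg_right
                (mul_le_mul_of_nonneg_right hC'M₁ (by positivity)) (by positivity)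
    · -- degenerate case
      push_neg at hε0
      have hcv : 0 ≤ C * ‖v - v'‖ := mul_nonneg hC.le hnv
      have hx : ‖x - x'‖ = 0 := le_antisymm (by linarith) hnx
      have hv0 : C * ‖v - v'‖ = 0 := le_antisymm (by linarith) hcv
      have hv : ‖v - v'‖ = 0 := (mul_eq_zero.1 hv0).resolve_left hC.ne'
      have hx' : x = x' := by rwa [norm_sub_eq_zero_iff] at hx
      have hv' : v = v' := by rwa [norm_sub_eq_zero_iff] at hv
      subst hx' hv'
      simp [hx, hv]
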